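/- Let G be a Lie algebra over a field k decomposed as a direct sum of vector subspaces G = G₁ ⊕ ⋯ ⊕ G_k where each Gᵢ is a Lie subalgebra, and suppose that for every pair i, j the subspace Gᵢ + Gⱼ is closed under the Lie bracket. Let λ₁, …, λ_k ∈ k, let πᵢ : G → Gᵢ be the projection associated with the direct sum decomposition, and set R = λ₁π₁ + ⋯ + λ_kπ_k. Then R satisfies the operator Yang-Baxter equation (1.7): R([R(X),Y] − [R(Y),X]) − [R(X),R(Y)] − R²([X,Y]) = 0 for all X, Y ∈ G. -/
import Mathlib


/-- If a Lie algebra `G` decomposes as a direct sum of subalgebras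
`G₁ ⊕ ⋯ ⊕ G_K` such that each pairwise sum `Gᵢ + Gⱼ` is closed under the bracket,
then `R = λ₁π₁ + ⋯ + λ_Kπ_K` satisfies the operator Yang-Baxter equation (1.7). -/
theorem stmt_10 {k G : Type*} [Field k] [LieRing G] [LieAlgebra k G]
    (K : ℕ) (Gs : Fin K → Submodule k G)
    (π : Fin K → (G →ₗ[k] G))
    (hmem : ∀ i x, π i x ∈ Gs i)
    (hsum : ∀ x, ∑ i, π i x = x)
    (hproj : ∀ i j, ∀ x ∈ Gs j, π i x = if i = j then x else 0)
    (hsub : ∀ i, ∀ x ∈ Gs i, ∀ y ∈ Gs i, ⁅x, y⁆ ∈ Gs i)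
    (hpair : ∀ i j, ∀ x ∈ Gs i ⊔ Gs j, ∀ y ∈ Gs i ⊔ Gs j, ⁅x, y⁆ ∈ Gs i ⊔ Gs j)
    (lam : Fin K → k)
    (R : G → G)
    (hR : ∀ x, R x = ∑ i, lam i • π i x) :
    ∀ X Y, R (⁅R X, Y⁆ - ⁅R Y, X⁆) - ⁅R X, R Y⁆ - R (R ⁅X, Y⁆) = 0 := by
  classical
  set S : G →ₗ[k] G := ∑ i, lam i • π i with hS
  have hRS : ∀ x, R x = S x := by
    intro x
    rw [hR, hS]
    simp [LinearMap.sum_apply, LinearMap.smul_apply]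
  have hSapp : ∀ x, S x = ∑ i, lam i • π i x := by
    intro x; rw [← hRS, hR]
  -- S on elements of a single subspace
  have hSel : ∀ i, ∀ z ∈ Gs i, S z = lam i • z := by
    intro i z hz
    rw [hSapp, Finset.sum_eq_single i]
    · rw [hproj i i z hz, if_pos rfl]
    · intro l _ hl
      rw [hproj l i z hz, if_neg hl, smul_zero]
    · intro h; exact absurd (Finset.mem_univ i) h
  -- projections vanish off the pair
  have hzero : ∀ i j l, l ≠ i → l ≠ j → ∀ z ∈ Gs i ⊔ Gs j, π l z = 0 := by
    intro i j l hli hlj z hz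
    obtain ⟨a, ha, b, hb, rfl⟩ := Submodule.mem_sup.mp hz
    rw [map_add, hproj l i a ha, hproj l j b hb, if_neg hli, if_neg hlj, add_zero]
  -- S on elements of a pairwise sum
  have hSpair : ∀ i j, i ≠ j → ∀ z ∈ Gs i ⊔ Gs j,
      S z = lam i • π i z + lam j • π j z := by
    intro i j hij z hz
    rw [hSapp]
    rw [← Finset.sum_subset (Finset.subset_univ ({i, j} : Finset (Fin K)))]
    · rw [Finset.sum_pair hij]
    · intro l _ hl
      simp only [Finset.mem_insert, Finset.mem_singleton, not_or] at hl
      rw [hzero i j l hl.1 hl.2 z hz, smul_zero]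
  -- decomposition of elements of a pairwise sum
  have hdecomp : ∀ i j, i ≠ j → ∀ z ∈ Gs i ⊔ Gs j, π i z + π j z = z := by
    intro i j hij z hz
    have := hsum z
    rw [← Finset.sum_subset (Finset.subset_univ ({i, j} : Finset (Fin K)))] at this
    · rwa [Finset.sum_pair hij] at this
    · intro l _ hl
      simp only [Finset.mem_insert, Finset.mem_singleton, not_or] at hl
      exact hzero i j l hl.1 hl.2 z hz
  -- key identity on pairwise sums
  have key : ∀ i j, ∀ z ∈ Gs i ⊔ Gs j,
      (lam i + lam j) • S z - (lam i * lam j) • z - S (S z) = 0 := by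
    intro i j z hz
    by_cases hij : i = j
    · subst hij
      have hz' : z ∈ Gs i := by simpa using hz
      rw [hSel i z hz', map_smul, hSel i z hz', smul_smul]
      module
    · have ha : π i z ∈ Gs i := hmem i z
      have hb : π j z ∈ Gs j := hmem j z
      have hSz : S z = lam i • π i z + lam j • π j z := hSpair i j hij z hz
      have hSzmem : S z ∈ Gs i ⊔ Gs j := by
        rw [hSz]
        exact Submodule.add_mem _ (Submodule.mem_sup_left (Submodule.smul_mem _ _ ha))
          (Submodule.mem_sup_right (Submodule.smul_mem _ _ hb))
      have hSSz : S (S z) = (lam i * lam i) • π i z + (lam j * lam j) • π j z := by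
        rw [hSpair i j hij (S z) hSzmem]
        have h1 : π i (S z) = lam i • π i z := by
          rw [hSz, map_add, map_smul, map_smul, hproj i i _ ha, hproj i j _ hb,
            if_pos rfl, if_neg hij, smul_zero, add_zero]
        have h2 : π j (S z) = lam j • π j z := by
          rw [hSz, map_add, map_smul, map_smul, hproj j i _ ha, hproj j j _ hb,
            if_pos rfl, if_neg (Ne.symm hij), smul_zero, zero_add]
        rw [h1, h2, smul_smul, smul_smul]
      have hz2 : (lam i * lam j) • z = (lam i * lam j) • ((π i) z + (π j) z) := by
        rw [hdecomp i j hij z hz]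
      rw [hSSz, hSz, hz2]
      module
    -- the trilinear-ish expression
  have base : ∀ i j, ∀ X ∈ Gs i, ∀ Y ∈ Gs j,
      S (⁅S X, Y⁆ - ⁅S Y, X⁆) - ⁅S X, S Y⁆ - S (S ⁅X, Y⁆) = 0 := by
    intro i j X hX Y hY
    have hz : ⁅X, Y⁆ ∈ Gs i ⊔ Gs j :=
      hpair i j X (Submodule.mem_sup_left hX) Y (Submodule.mem_sup_right hY)
    have h1 : ⁅S X, Y⁆ - ⁅S Y, X⁆ = (lam i + lam j) • ⁅X, Y⁆ := by
      rw [hSel i X hX, hSel j Y hY, smul_lie, smul_lie, ← lie_skew Y X, smul_neg,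
        sub_neg_eq_add, add_smul]
    have h2 : ⁅S X, S Y⁆ = (lam i * lam j) • ⁅X, Y⁆ := by
      rw [hSel i X hX, hSel j Y hY, smul_lie, lie_smul, smul_smul]
    rw [h1, h2, map_smul]
    exact key i j ⁅X, Y⁆ hz
  -- bilinearity in X and Y
  have F0r : ∀ Y, S (⁅S 0, Y⁆ - ⁅S Y, 0⁆) - ⁅S 0, S Y⁆ - S (S ⁅(0:G), Y⁆) = 0 := by
    intro Y; simp
  have F0l : ∀ X, S (⁅S X, 0⁆ - ⁅S 0, X⁆) - ⁅S X, S 0⁆ - S (S ⁅X, (0:G)⁆) = 0 := by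
    intro X; simp
  have Faddl : ∀ X X' Y,
      S (⁅S (X + X'), Y⁆ - ⁅S Y, X + X'⁆) - ⁅S (X + X'), S Y⁆ - S (S ⁅X + X', Y⁆)
      = (S (⁅S X, Y⁆ - ⁅S Y, X⁆) - ⁅S X, S Y⁆ - S (S ⁅X, Y⁆))
        + (S (⁅S X', Y⁆ - ⁅S Y, X'⁆) - ⁅S X', S Y⁆ - S (S ⁅X', Y⁆)) := by
    intro X X' Y
    simp only [map_add, add_lie, lie_add, map_sub, map_add]
    abel
  have Faddr : ∀ X Y Y',
      S (⁅S X, Y + Y'⁆ - ⁅S (Y + Y'), X⁆) - ⁅S X, S (Y + Y')⁆ - S (S ⁅X, Y + Y'⁆)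
      = (S (⁅S X, Y⁆ - ⁅S Y, X⁆) - ⁅S X, S Y⁆ - S (S ⁅X, Y⁆))
        + (S (⁅S X, Y'⁆ - ⁅S Y', X⁆) - ⁅S X, S Y'⁆ - S (S ⁅X, Y'⁆)) := by
    intro X Y Y'
    simp only [map_add, add_lie, lie_add, map_sub, map_add]
    abel
  -- reduce to sums over projections
  intro X Y
  simp only [hRS]
  have hX : X = ∑ i, π i X := (hsum X).symm
  have hY : Y = ∑ j, π j Y := (hsum Y).symm
  rw [hX, hY]
  have sum_red : ∀ (s : Finset (Fin K)) (Y : G), (∃ j, Y ∈ Gs j) →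
      S (⁅S (∑ i ∈ s, π i X), Y⁆ - ⁅S Y, ∑ i ∈ s, π i X⁆)
        - ⁅S (∑ i ∈ s, π i X), S Y⁆ - S (S ⁅∑ i ∈ s, π i X, Y⁆) = 0 := by
    intro s Y hYmem
    induction s using Finset.induction with
    | empty => simpa using F0r Y
    | @insert a s' hnotmem ih =>
      rw [Finset.sum_insert hnotmem, Faddl, ih, add_zero]
      obtain ⟨j, hj⟩ := hYmem
      exact base a j (π a X) (hmem a X) Y hj
  have sum_red2 : ∀ (t : Finset (Fin K)),
      S (⁅S (∑ i, π i X), ∑ j ∈ t, π j Y⁆ - ⁅S (∑ j ∈ t, π j Y), ∑ i, π i X⁆)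
        - ⁅S (∑ i, π i X), S (∑ j ∈ t, π j Y)⁆
        - S (S ⁅∑ i, π i X, ∑ j ∈ t, π j Y⁆) = 0 := by
    intro t
    induction t using Finset.induction with
    | empty => simpa using F0l (∑ i, π i X)
    | @insert a t' hnotmem ih =>
      rw [Finset.sum_insert hnotmem, Faddr, ih, add_zero]
      exact sum_red Finset.univ (π a Y) ⟨a, hmem a Y⟩
  exact sum_red2 Finset.univ
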